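/- Let Σ be a closed two-sided stable minimal surface of genus g ≥ 2 in a Riemannian 3-manifold (M, g) with scalar curvature R ≥ -6. Then the area of Σ satisfies |Σ| ≥ (4π/3)(g - 1). -/

import Mathlib

open Real MeasureTheory

/-- Area bound for stable minimal surfaces: let `Σ` be a closed two-sided stable minimal
surface of genus `g ≥ 2` (with area measure `ν`, Gauss curvature `K`, ambient scalar
curvature `R ≥ -6`, `Ric = Ric(n,n)`, and `A2 = |A|² ≥ 0`).  Stability with test function
`φ ≡ 1` gives `∫ (Ric + |A|²) ≤ 0`, the Gauss equation with `H = 0` gives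
`2K = R - 2Ric - |A|²`, and Gauss–Bonnet gives `∫ K = 2π(2 - 2g)`.  Then
`|Σ| ≥ (4π/3)(g-1)`. -/
theorem stable_minimal_area_bound {α : Type*} [MeasurableSpace α] (ν : Measure α)
    [IsFiniteMeasure ν] (g : ℝ) (hg : 2 ≤ g) (K R Ric A2 : α → ℝ)
    (hK : Integrable K ν) (hR : Integrable R ν) (hRic : Integrable Ric ν)
    (hA2int : Integrable A2 ν)
    (hstable : ∫ x, (Ric x + A2 x) ∂ν ≤ 0)
    (hGauss : ∀ x, 2 * K x = R x - 2 * Ric x - A2 x)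
    (hRlow : ∀ x, -6 ≤ R x) (hA2 : ∀ x, 0 ≤ A2 x)
    (hGB : ∫ x, K x ∂ν = 2 * Real.pi * (2 - 2 * g)) :
    4 * Real.pi / 3 * (g - 1) ≤ (ν Set.univ).toReal := by
  set V := (ν Set.univ).toReal with hV
  -- pointwise: R + A2 = 2K + 2(Ric + A2)
  have hpt : ∀ x, R x + A2 x = 2 * K x + 2 * (Ric x + A2 x) := by
    intro x; have := hGauss x; linarith
  have h1 : ∫ x, (R x + A2 x) ∂ν = 2 * (∫ x, K x ∂ν) + 2 * ∫ x, (Ric x + A2 x) ∂ν := by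
    calc ∫ x, (R x + A2 x) ∂ν = ∫ x, (2 * K x + 2 * (Ric x + A2 x)) ∂ν := by
          exact integral_congr_ae (Filter.Eventually.of_forall hpt)
      _ = 2 * (∫ x, K x ∂ν) + 2 * ∫ x, (Ric x + A2 x) ∂ν := by
          have hsum : Integrable (fun x => Ric x + A2 x) ν := hRic.add hA2int
          rw [integral_add ((hK.const_mul 2 : Integrable (fun x => 2 * K x) ν))
            ((hsum.const_mul 2 : Integrable (fun x => 2 * (Ric x + A2 x)) ν)),
            MeasureTheory.integral_const_mul, MeasureTheory.integral_const_mul]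
  have h2 : -6 * V ≤ ∫ x, (R x + A2 x) ∂ν := by
    have := integral_mono (μ := ν) (integrable_const (-6 : ℝ)) (hR.add hA2int)
      (fun x => by have := hRlow x; have := hA2 x; simp only [Pi.add_apply]; linarith)
    simpa [integral_const, hV, smul_eq_mul, mul_comm, Measure.real] using this
  have h3 : ∫ x, (R x + A2 x) ∂ν ≤ 2 * (2 * Real.pi * (2 - 2 * g)) := by
    rw [h1, hGB]; linarith
  nlinarith [h2, h3, Real.pi_pos]
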